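/- Let T be a 1.5D terrain given by a continuous function f : ℝ → ℝ, and let p_i, p_j be points on T with y(p_i) < y(p_j). Let q be a point on T with x(q) > x(p_i) lying on the perpendicular bisector of p_i and p_j. Then any point r on T with x(r) > x(q) that is visible from p_i is strictly closer to p_j than to p_i. -/

import Mathlib

/-- Euclidean distance between two points of `ℝ × ℝ`. -/
noncomputable def edist2 (p q : ℝ × ℝ) : ℝ :=
  Real.sqrt ((p.1 - q.1) ^ 2 + (p.2 - q.2) ^ 2)

/-- `p` sees `q` over the terrain given by `f`: every point of the segment
`[p, q]` lies weakly above the graph of `f`. -/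
def sees (f : ℝ → ℝ) (p q : ℝ × ℝ) : Prop :=
  ∀ t : ℝ, t ∈ Set.Icc (0 : ℝ) 1 →
    (1 - t) * p.2 + t * q.2 ≥ f ((1 - t) * p.1 + t * q.1)

/-- Key lemma, right-side case. -/
theorem key_lemma_right (f : ℝ → ℝ) (hf : Continuous f)
    (xi xj xq xr : ℝ)
    (hy : f xi < f xj)
    (hq_right : xq > xi)
    (hq_bis : edist2 (xq, f xq) (xi, f xi) = edist2 (xq, f xq) (xj, f xj))
    (hr_right : xr > xq)
    (hvis : sees f (xi, f xi) (xr, f xr)) :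
    edist2 (xr, f xr) (xj, f xj) < edist2 (xr, f xr) (xi, f xi) := by
  -- squared bisector equality
  have hE : (xq - xi)^2 + (f xq - f xi)^2 = (xq - xj)^2 + (f xq - f xj)^2 := by
    have h1 : (0:ℝ) ≤ (xq - xi)^2 + (f xq - f xi)^2 := by positivity
    have h2 : (0:ℝ) ≤ (xq - xj)^2 + (f xq - f xj)^2 := by positivity
    unfold edist2 at hq_bis
    simp only at hq_bis
    have := congrArg (fun x : ℝ => x ^ 2) hq_bis
    simpa [Real.sq_sqrt h1, Real.sq_sqrt h2] using this
  have hxr : (0:ℝ) < xr - xi := by linarith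
  -- visibility at x = xq
  set t : ℝ := (xq - xi) / (xr - xi) with ht_def
  have ht : t ∈ Set.Icc (0:ℝ) 1 := by
    constructor
    · apply div_nonneg <;> linarith
    · rw [div_le_one hxr]; linarith
  have hx : (1 - t) * xi + t * xr = xq := by
    field_simp [ht_def]
    have htm : t * (xr - xi) = xq - xi := by rw [ht_def]; exact div_mul_cancel₀ _ hxr.ne'
    linear_combination htm
  have hV := hvis t ht
  simp only at hV
  rw [hx] at hV
  have hV' : (f xq - f xi) * (xr - xi) ≤ (xq - xi) * (f xr - f xi) := by
    have hm := mul_le_mul_of_nonneg_right hV hxr.le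
    have h1t : (1 - t) * (xr - xi) = xr - xq := by
      rw [ht_def]; field_simp; ring
    have h2t : t * (xr - xi) = xq - xi := by
      rw [ht_def]; field_simp
    have hexp : ((1 - t) * f xi + t * f xr) * (xr - xi)
        = (xr - xq) * f xi + (xq - xi) * f xr := by
      linear_combination f xi * h1t + f xr * h2t
    nlinarith [hm, hexp]
  -- r is strictly on p_j's side of the bisector
  have hb : (0:ℝ) < f xj - f xi := by linarith
  have key : 0 < (xq - xi) * ((xr - xq) * (xj - xi) + (f xr - f xq) * (f xj - f xi)) := by
    nlinarith [mul_nonneg (sub_nonneg.2 hV') hb.le,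
      mul_pos (sub_pos.2 hr_right) (add_pos_of_nonneg_of_pos (sq_nonneg (xj - xi)) (pow_pos hb 2))]
  have key' : 0 < (xr - xq) * (xj - xi) + (f xr - f xq) * (f xj - f xi) := by
    nlinarith [key, hq_right]
  -- squared inequality
  have hsq : (xr - xj)^2 + (f xr - f xj)^2 < (xr - xi)^2 + (f xr - f xi)^2 := by
    nlinarith [key', hE]
  unfold edist2
  simp only
  have h3 : (0:ℝ) ≤ (xr - xj)^2 + (f xr - f xj)^2 := by positivity
  exact Real.sqrt_lt_sqrt h3 hsq
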